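/- Let X be a normed space, x, y ∈ X with x ≠ 0, and ε ∈ [0,1). Then ‖x + λy‖² ≥ ‖x‖² − 2ε‖x‖‖λy‖ for all scalars λ if and only if there exists f ∈ X* with ‖f‖ = 1 and f(x) = ‖x‖ such that |f(y)| ≤ ε‖y‖. -/

import Mathlib

open Filter Set
open Topology

set_option maxHeartbeats 8000000

theorem epsilon_birkhoff_vector_iff
    {𝕜 X : Type*} [RCLike 𝕜] [NormedAddCommGroup X] [NormedSpace 𝕜 X]
    (x y : X) (hx : x ≠ 0) (ε : ℝ) (hε : ε ∈ Set.Ico (0 : ℝ) 1) :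
    (∀ lam : 𝕜, ‖x + lam • y‖ ^ 2 ≥ ‖x‖ ^ 2 - 2 * ε * ‖x‖ * ‖lam • y‖) ↔
      ∃ f : X →L[𝕜] 𝕜, ‖f‖ = 1 ∧ f x = (‖x‖ : 𝕜) ∧ ‖f y‖ ≤ ε * ‖y‖ := by
  obtain ⟨hε0, hε1⟩ := hε
  have hX : (0:ℝ) < ‖x‖ := norm_pos_iff.2 hx
  constructor
  · intro h
    -- Step 1: pointwise linear estimate
    have key : ∀ lam : 𝕜, ‖x‖ - ε * ‖lam • y‖ ≤ ‖x + lam • y‖ := by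
      intro lam
      by_cases hw0 : lam • y = 0
      · rw [hw0]
        simp only [norm_zero, mul_zero, sub_zero, add_zero]
        exact le_refl _
      set w := lam • y with hw
      set T := ‖w‖ with hT
      have hTpos : 0 < T := norm_pos_iff.2 hw0
      have hlim : Tendsto (fun t : ℝ => -(2*ε*‖x‖*T) / (2*‖x‖ - t*T)) (𝓝[>] (0:ℝ))
          (𝓝 (-(ε*T))) := by
        have hden : Tendsto (fun t : ℝ => 2*‖x‖ - t*T) (𝓝 (0:ℝ)) (𝓝 (2*‖x‖ - 0*T)) :=
          (continuous_const.sub (continuous_id.mul continuous_const)).tendsto 0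
        have hne : (2*‖x‖ - 0*T) ≠ 0 := by
          rw [zero_mul, sub_zero]; positivity
        have h1 := (tendsto_const_nhds (x := -(2*ε*‖x‖*T)) (f := 𝓝 (0:ℝ))).div hden hne
        have hval : -(2*ε*‖x‖*T) / (2*‖x‖ - 0*T) = -(ε*T) := by
          rw [zero_mul, sub_zero]
          field_simp
        rw [hval] at h1
        exact h1.mono_left nhdsWithin_le_nhds
      have hδpos : 0 < min 1 (‖x‖ / T) := lt_min one_pos (by positivity)
      have hev : ∀ᶠ t in 𝓝[>] (0:ℝ),
          -(2*ε*‖x‖*T) / (2*‖x‖ - t*T) ≤ ‖x + w‖ - ‖x‖ := by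
        filter_upwards [Ioo_mem_nhdsGT_of_mem (Set.left_mem_Ico.2 hδpos)] with t ht
        obtain ⟨ht0, htδ⟩ := ht
        have ht1 : t ≤ 1 := le_of_lt (lt_of_lt_of_le htδ (min_le_left _ _))
        have htT : t * T < ‖x‖ := by
          have h' := lt_of_lt_of_le htδ (min_le_right _ _)
          calc t * T < (‖x‖ / T) * T := mul_lt_mul_of_pos_right h' hTpos
          _ = ‖x‖ := by field_simp
        have hD : 0 < 2*‖x‖ - t*T := by linarith
        set φt := ‖x + ((t:ℝ):𝕜) • w‖ with hφt
        have hφt0 : (0:ℝ) ≤ φt := norm_nonneg _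
        have hnt : ‖((t:ℝ):𝕜) • w‖ = t * T := by
          rw [norm_smul, RCLike.norm_ofReal, abs_of_pos ht0]
        have h1 : φt^2 ≥ ‖x‖^2 - 2*ε*‖x‖*(t*T) := by
          have h' := h (((t:ℝ):𝕜) * lam)
          rw [mul_smul, ← hw, hnt] at h'
          exact h'
        have h2 : φt ≤ (1-t)*‖x‖ + t*‖x + w‖ := by
          have hxw : x + ((t:ℝ):𝕜) • w = ((1-t : ℝ):𝕜) • x + ((t:ℝ):𝕜) • (x + w) := by
            rw [smul_add]
            rw [← add_assoc]
            congr 1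
            rw [← add_smul]
            norm_num
          rw [hφt, hxw]
          calc ‖((1-t : ℝ):𝕜) • x + ((t:ℝ):𝕜) • (x + w)‖
              ≤ ‖((1-t : ℝ):𝕜) • x‖ + ‖((t:ℝ):𝕜) • (x + w)‖ := norm_add_le _ _
          _ = (1-t)*‖x‖ + t*‖x + w‖ := by
              rw [norm_smul, norm_smul, RCLike.norm_ofReal, RCLike.norm_ofReal,
                abs_of_nonneg (by linarith : (0:ℝ) ≤ 1 - t), abs_of_pos ht0]
        have h3 : ‖x‖ ≤ φt + t*T := by
          calc ‖x‖ = ‖(x + ((t:ℝ):𝕜) • w) - ((t:ℝ):𝕜) • w‖ := by rw [add_sub_cancel_right]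
          _ ≤ φt + ‖((t:ℝ):𝕜) • w‖ := norm_sub_le _ _
          _ = φt + t*T := by rw [hnt]
        rw [div_le_iff₀ hD]
        -- goal: -(2*ε*‖x‖*T) ≤ (‖x + w‖ - ‖x‖) * (2*‖x‖ - t*T)
        have hB : (φt - ‖x‖) * (φt + ‖x‖) ≥ -(2*ε*‖x‖*(t*T)) := by nlinarith [h1]
        have h2' : φt - ‖x‖ ≤ t * (‖x + w‖ - ‖x‖) := by nlinarith [h2]
        have hsum : (0:ℝ) < φt + ‖x‖ := by linarith
        have hDle : 2*‖x‖ - t*T ≤ φt + ‖x‖ := by linarith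
        have hmul : t * (‖x + w‖ - ‖x‖) * (φt + ‖x‖) ≥ -(2*ε*‖x‖*(t*T)) := by
          calc t * (‖x + w‖ - ‖x‖) * (φt + ‖x‖)
              ≥ (φt - ‖x‖) * (φt + ‖x‖) := mul_le_mul_of_nonneg_right h2' hsum.le
          _ ≥ -(2*ε*‖x‖*(t*T)) := hB
        have h9 : -(2*ε*‖x‖*T) ≤ (‖x + w‖ - ‖x‖) * (φt + ‖x‖) := by nlinarith [hmul, ht0]
        rcases le_or_gt 0 (‖x + w‖ - ‖x‖) with hA | hA
        · have hpos : (0:ℝ) ≤ (‖x + w‖ - ‖x‖) * (2*‖x‖ - t*T) := mul_nonneg hA hD.le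
          have : (0:ℝ) ≤ 2*ε*‖x‖*T := by positivity
          linarith
        · have hmm := mul_le_mul_of_nonpos_left hDle hA.le
          linarith
      have hfin : -(ε*T) ≤ ‖x + w‖ - ‖x‖ := le_of_tendsto hlim hev
      linarith
    -- real scalar structure
    letI : Module ℝ X := RestrictScalars.module ℝ 𝕜 X
    letI : IsScalarTower ℝ 𝕜 X := RestrictScalars.isScalarTower ℝ 𝕜 X
    letI : NormedSpace ℝ X := NormedSpace.restrictScalars ℝ 𝕜 X
    set N : X → ℝ := fun v => ⨅ lam : 𝕜, (‖v - lam • y‖ + ε * (‖lam‖ * ‖y‖)) with hNdef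
    have hbdd : ∀ v : X, BddBelow (Set.range fun lam : 𝕜 => ‖v - lam • y‖ + ε * (‖lam‖ * ‖y‖)) := by
      intro v
      refine ⟨0, ?_⟩
      rintro r ⟨lam, rfl⟩
      positivity
    have hNle : ∀ (v : X) (lam : 𝕜), N v ≤ ‖v - lam • y‖ + ε * (‖lam‖ * ‖y‖) :=
      fun v lam => ciInf_le (hbdd v) lam
    have hN0 : ∀ v, 0 ≤ N v := fun v => le_ciInf (fun lam => by positivity)
    have hNnorm : ∀ v, N v ≤ ‖v‖ := by
      intro v
      have := hNle v 0
      simpa using this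
    have hNx : ‖x‖ ≤ N x := by
      refine le_ciInf fun lam => ?_
      have hk := key (-lam)
      rw [neg_smul, ← sub_eq_add_neg, norm_neg, norm_smul] at hk
      linarith
    have N_add : ∀ u v : X, N (u + v) ≤ N u + N v := by
      intro u v
      have hval : ∀ l m : 𝕜, N (u+v) ≤ (‖u - l•y‖ + ε*(‖l‖*‖y‖)) + (‖v - m•y‖ + ε*(‖m‖*‖y‖)) := by
        intro l m
        refine (hNle (u+v) (l+m)).trans ?_
        have e1 : u + v - (l+m)•y = (u - l•y) + (v - m•y) := by
          rw [add_smul]; abel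
        have h1 : ‖u + v - (l+m)•y‖ ≤ ‖u - l•y‖ + ‖v - m•y‖ := by
          rw [e1]; exact norm_add_le _ _
        have h2 : ε*(‖l+m‖*‖y‖) ≤ ε*(‖l‖*‖y‖) + ε*(‖m‖*‖y‖) := by
          have hlm := norm_add_le l m
          nlinarith [mul_le_mul_of_nonneg_left (mul_le_mul_of_nonneg_right hlm (norm_nonneg y)) hε0]
        linarith
      have h1 : ∀ l : 𝕜, N (u+v) - (‖u - l•y‖ + ε*(‖l‖*‖y‖)) ≤ N v :=
        fun l => le_ciInf fun m => by linarith [hval l m]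
      have h2 : N (u+v) - N v ≤ N u := le_ciInf fun l => by linarith [h1 l]
      linarith
    have N_hom : ∀ c : ℝ, 0 < c → ∀ v : X, N (c • v) = c * N v := by
      intro c hc v
      have hcv : c • v = ((c:ℝ):𝕜) • v := RCLike.real_smul_eq_coe_smul c v
      have hcne : ((c:ℝ):𝕜) ≠ 0 := by
        simpa using hc.ne'
      apply le_antisymm
      · have hub : ∀ m : 𝕜, N (c•v) ≤ c * (‖v - m•y‖ + ε*(‖m‖*‖y‖)) := by
          intro m
          refine (hNle (c•v) (((c:ℝ):𝕜)*m)).trans ?_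
          have e1 : c•v - (((c:ℝ):𝕜)*m)•y = ((c:ℝ):𝕜) • (v - m•y) := by
            rw [hcv, mul_smul, smul_sub]
          rw [e1, norm_smul, RCLike.norm_ofReal, abs_of_pos hc, norm_mul,
            RCLike.norm_ofReal, abs_of_pos hc]
          exact le_of_eq (by ring)
        have hdiv : N (c•v) / c ≤ N v := by
          refine le_ciInf fun m => ?_
          rw [div_le_iff₀ hc]
          calc N (c•v) ≤ c * (‖v - m•y‖ + ε*(‖m‖*‖y‖)) := hub m
          _ = (‖v - m•y‖ + ε*(‖m‖*‖y‖)) * c := by ring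
        rw [div_le_iff₀ hc] at hdiv
        linarith [hdiv]
      · refine le_ciInf fun l => ?_
        have h' := hNle v (((c:ℝ):𝕜)⁻¹ * l)
        have e1 : ‖c•v - l•y‖ = c * ‖v - (((c:ℝ):𝕜)⁻¹ * l)•y‖ := by
          have : c•v - l•y = ((c:ℝ):𝕜) • (v - (((c:ℝ):𝕜)⁻¹ * l)•y) := by
            rw [hcv, smul_sub, mul_smul]
            rw [smul_smul, mul_inv_cancel₀ hcne, one_smul]
          rw [this, norm_smul, RCLike.norm_ofReal, abs_of_pos hc]
        have e2 : ‖l‖ = c * ‖((c:ℝ):𝕜)⁻¹ * l‖ := by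
          rw [norm_mul, norm_inv, RCLike.norm_ofReal, abs_of_pos hc]
          field_simp
        rw [e1, e2]
        nlinarith [mul_le_mul_of_nonneg_left h' hc.le, norm_nonneg y]
    -- Hahn–Banach with sublinear functional N
    obtain ⟨g, hg_eq, hg_le⟩ :=
      exists_extension_of_le_sublinear (LinearPMap.mkSpanSingleton x ‖x‖ hx) N N_hom N_add (by
        rintro ⟨v, hv⟩
        obtain ⟨s, rfl⟩ := Submodule.mem_span_singleton.1 hv
        rw [LinearPMap.mkSpanSingleton'_apply]
        rcases le_or_gt s 0 with hs | hs
        · have : s • ‖x‖ ≤ 0 := smul_nonpos_of_nonpos_of_nonneg hs (norm_nonneg x)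
          exact this.trans (hN0 _)
        · rw [N_hom s hs]
          have := mul_le_mul_of_nonneg_left hNx hs.le
          simpa [smul_eq_mul] using this)
    have hgx : g x = ‖x‖ := by
      have h' := hg_eq ⟨x, Submodule.mem_span_singleton_self x⟩
      rwa [LinearPMap.mkSpanSingleton_apply] at h'
    have hgb : ∀ v : X, |g v| ≤ ‖v‖ := by
      intro v
      refine abs_le.2 ⟨?_, (hg_le v).trans (hNnorm v)⟩
      have h1 := (hg_le (-v)).trans (hNnorm (-v))
      rw [map_neg, norm_neg] at h1
      linarith
    set g' : X →L[ℝ] ℝ := g.mkContinuous 1 (fun v => by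
      rw [Real.norm_eq_abs, one_mul]; exact hgb v) with hg'def
    have hg'app : ∀ v : X, g' v = g v := fun v => rfl
    have hg'1 : ‖g'‖ ≤ 1 := g.mkContinuous_norm_le zero_le_one _
    set f : X →L[𝕜] 𝕜 := g'.extendTo𝕜' with hfdef
    have hfle : ‖f‖ ≤ 1 := by
      rw [hfdef, show ‖g'.extendTo𝕜'‖ = ‖g'‖ from ContinuousLinearMap.norm_extendTo𝕜' g']
      exact hg'1
    have happ : ∀ v : X, f v = (g' v : 𝕜) - (RCLike.I : 𝕜) * (g' ((RCLike.I : 𝕜) • v) : 𝕜) :=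
      fun v => ContinuousLinearMap.extendTo𝕜'_apply g' v
    have hre : ∀ v : X, RCLike.re (f v) = g' v := by
      intro v
      rw [happ v]
      simp [RCLike.mul_re, RCLike.I_re]
    have hfx : f x = (‖x‖ : 𝕜) := by
      have h1 : RCLike.re (f x) = ‖x‖ := by rw [hre x, hg'app, hgx]
      have h2 : ‖f x‖ ≤ ‖x‖ := by
        calc ‖f x‖ ≤ ‖f‖ * ‖x‖ := f.le_opNorm x
        _ ≤ 1 * ‖x‖ := mul_le_mul_of_nonneg_right hfle (norm_nonneg x)
        _ = ‖x‖ := one_mul _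
      have h3 : ‖f x‖^2 = RCLike.re (f x) * RCLike.re (f x) + RCLike.im (f x) * RCLike.im (f x) :=
        RCLike.norm_sq_eq_def
      have him : RCLike.im (f x) = 0 := by nlinarith [h3, h1, h2, norm_nonneg (f x)]
      apply RCLike.ext
      · rw [h1, RCLike.ofReal_re]
      · rw [him, RCLike.ofReal_im]
    have hnf1 : ‖f‖ = 1 := by
      apply le_antisymm hfle
      have he : ‖x‖ = ‖f x‖ := by rw [hfx, RCLike.norm_ofReal, abs_of_nonneg (norm_nonneg x)]
      have h2 : ‖f x‖ ≤ ‖f‖ * ‖x‖ := f.le_opNorm x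
      nlinarith [h2, he, hX]
    refine ⟨f, hnf1, hfx, ?_⟩
    -- bound on ‖f y‖
    set a : ℝ := g' y with hadef
    set b : ℝ := g' ((RCLike.I : 𝕜) • y) with hbdef
    set μ : 𝕜 := ((a:ℝ):𝕜) + ((b:ℝ):𝕜) * RCLike.I with hμdef
    have hμnorm : ‖μ‖ = ‖f y‖ := by
      have : μ = starRingEnd 𝕜 (f y) := by
        rw [happ y, map_sub, map_mul, RCLike.conj_I, RCLike.conj_ofReal, RCLike.conj_ofReal,
          hμdef]
        ring
      rw [this, RCLike.norm_conj]
    have hgμ : g (μ • y) = a*a + b*b := by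
      have e1 : μ • y = a • y + b • ((RCLike.I : 𝕜) • y) := by
        rw [hμdef, add_smul, mul_smul, RCLike.real_smul_eq_coe_smul (K := 𝕜) a,
          RCLike.real_smul_eq_coe_smul (K := 𝕜) b]
      rw [e1, map_add, map_smul, map_smul, smul_eq_mul, smul_eq_mul]
      rw [← hg'app y, ← hg'app ((RCLike.I : 𝕜) • y), ← hadef, ← hbdef]
    have hgμle : g (μ • y) ≤ ε * (‖μ‖ * ‖y‖) := by
      refine (hg_le (μ • y)).trans ?_
      have := hNle (μ • y) μ
      simpa using this
    have hμsq : ‖μ‖^2 ≤ a*a + b*b := by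
      have h1 : RCLike.re μ = a := by
        rw [hμdef]
        simp [RCLike.mul_re, RCLike.I_re]
      have h2 : RCLike.im μ = b * RCLike.im (RCLike.I : 𝕜) := by
        rw [hμdef]
        simp [RCLike.mul_im, RCLike.I_re]
      have h3 : RCLike.im (RCLike.I : 𝕜) * RCLike.im (RCLike.I : 𝕜) ≤ 1 := by
        rcases RCLike.I_mul_I_ax (K := 𝕜) with h | h
        · rw [h]; simp
        · have := congrArg RCLike.re h
          rw [RCLike.mul_re, RCLike.I_re] at this
          simp at this
          nlinarith [this]
      have h4 : ‖μ‖^2 = RCLike.re μ * RCLike.re μ + RCLike.im μ * RCLike.im μ :=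
        RCLike.norm_sq_eq_def
      rw [h4, h1, h2]
      nlinarith [h3, sq_nonneg b]
    clear hμdef hadef hbdef
    clear_value μ
    clear_value a
    clear_value b
    rcases eq_or_lt_of_le (norm_nonneg μ) with h0 | h0
    · rw [← hμnorm, ← h0]
      positivity
    · have hab : a*a + b*b ≤ ε * (‖μ‖ * ‖y‖) := by linarith [hgμ.le, hgμ.ge, hgμle]
      have hc1 : ‖μ‖^2 ≤ ε * (‖μ‖ * ‖y‖) := by linarith [hμsq, hab]
      have hc2 : ‖μ‖ ≤ ε * ‖y‖ := by nlinarith [hc1, h0]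
      rw [← hμnorm]
      exact hc2
  · rintro ⟨f, hf1, hfx, hfy⟩ lam
    have hT0 : (0:ℝ) ≤ ‖lam • y‖ := norm_nonneg _
    have hN0 : (0:ℝ) ≤ ‖x + lam • y‖ := norm_nonneg _
    have h1 : ‖x‖ - ε * ‖lam • y‖ ≤ ‖x + lam • y‖ := by
      have e1 : (‖x‖:ℝ) = ‖f x‖ := by
        rw [hfx, RCLike.norm_ofReal, abs_of_nonneg (norm_nonneg x)]
      have e2 : f x = f (x + lam • y) - lam * f y := by
        rw [map_add, map_smul, smul_eq_mul]
        ring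
      have e3 : ‖f x‖ ≤ ‖f (x + lam • y)‖ + ‖lam‖ * ‖f y‖ := by
        rw [e2]
        calc ‖f (x + lam • y) - lam * f y‖ ≤ ‖f (x + lam • y)‖ + ‖lam * f y‖ := norm_sub_le _ _
        _ = ‖f (x + lam • y)‖ + ‖lam‖ * ‖f y‖ := by rw [norm_mul]
      have e4 : ‖f (x + lam • y)‖ ≤ ‖x + lam • y‖ := by
        calc ‖f (x + lam • y)‖ ≤ ‖f‖ * ‖x + lam • y‖ := f.le_opNorm _
        _ = ‖x + lam • y‖ := by rw [hf1, one_mul]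
      have e5 : ‖lam‖ * ‖f y‖ ≤ ε * ‖lam • y‖ := by
        rw [norm_smul]
        calc ‖lam‖ * ‖f y‖ ≤ ‖lam‖ * (ε * ‖y‖) := by
              exact mul_le_mul_of_nonneg_left hfy (norm_nonneg lam)
        _ = ε * (‖lam‖ * ‖y‖) := by ring
      have e6 : ‖x‖ ≤ ‖f (x + lam • y)‖ + ‖lam‖ * ‖f y‖ := by rw [e1]; exact e3
      linarith
    rcases le_or_gt (ε * ‖lam • y‖) ‖x‖ with hc | hc
    · have h2 : (0:ℝ) ≤ ‖x‖ - ε * ‖lam • y‖ := by linarith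
      have h3 := mul_self_le_mul_self h2 h1
      nlinarith [h3, sq_nonneg (ε * ‖lam • y‖), mul_nonneg hε0 hT0]
    · have h4 : (0:ℝ) ≤ ε * ‖lam • y‖ := by positivity
      nlinarith [mul_le_mul_of_nonneg_left hc.le hX.le, sq_nonneg (‖x + lam • y‖)]
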